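/- Suppose E₁ and E₂ are both stable bundles of the same rank r and degree d over a compact Riemann surface, and Φ: E₂ → E₁ is a nontrivial holomorphic map. Then for every τ > μ(E₁) = d/r, the triple (E₁, E₂, Φ) is τ-stable. -/

import Mathlib

open CategoryTheory CategoryTheory.Limits

noncomputable section

/-- Slope `d/r` of a bundle of degree `d` and rank `r`. -/
def bslope (d : ℤ) (r : ℕ) : ℝ := (d : ℝ) / (r : ℝ)

/-- The quantity `θ_τ(T')` for a subtriple with ranks `r1', r2'` and degrees `d1', d2'`
of a triple with ranks `r1, r2` and degrees `d1, d2`. -/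
def thetaTau (τ : ℝ) (r1 r2 : ℕ) (d1 d2 : ℤ) (r1' r2' : ℕ) (d1' d2' : ℤ) : ℝ :=
  (bslope (d1' + d2') (r1' + r2') - τ) -
    ((r2' : ℝ) / (r2 : ℝ)) * (((r1 : ℝ) + (r2 : ℝ)) / ((r1' : ℝ) + (r2' : ℝ))) *
      (bslope (d1 + d2) (r1 + r2) - τ)

universe v u

variable {C : Type u} [Category.{v} C] [Abelian C]

/-- `(E1', E2')` is a subtriple of `(E1, E2, Φ)` : `Φ` maps `E2'` into `E1'`. -/
def IsSubtriple {E1 E2 : C} (Φ : E2 ⟶ E1) (E1' : Subobject E1) (E2' : Subobject E2) : Prop :=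
  E1'.Factors (E2'.arrow ≫ Φ)

/-- `θ_τ` of a subtriple, expressed through rank and degree functions. -/
def theta (rank : C → ℕ) (deg : C → ℤ) (E1 E2 : C) (τ : ℝ)
    (E1' : Subobject E1) (E2' : Subobject E2) : ℝ :=
  thetaTau τ (rank E1) (rank E2) (deg E1) (deg E2)
    (rank (E1' : C)) (rank (E2' : C)) (deg (E1' : C)) (deg (E2' : C))

/-- τ-stability of the holomorphic triple `(E1, E2, Φ)`. -/
def TStable (rank : C → ℕ) (deg : C → ℤ) (E1 E2 : C) (Φ : E2 ⟶ E1) (τ : ℝ) : Prop :=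
  ∀ (E1' : Subobject E1) (E2' : Subobject E2), IsSubtriple Φ E1' E2' →
    ¬(E1' = ⊥ ∧ E2' = ⊥) → ¬(E1' = ⊤ ∧ E2' = ⊤) →
    theta rank deg E1 E2 τ E1' E2' < 0

/-- τ-semistability of the holomorphic triple `(E1, E2, Φ)`. -/
def TSemistable (rank : C → ℕ) (deg : C → ℤ) (E1 E2 : C) (Φ : E2 ⟶ E1) (τ : ℝ) : Prop :=
  ∀ (E1' : Subobject E1) (E2' : Subobject E2), IsSubtriple Φ E1' E2' →
    ¬(E1' = ⊥ ∧ E2' = ⊥) → ¬(E1' = ⊤ ∧ E2' = ⊤) →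
    theta rank deg E1 E2 τ E1' E2' ≤ 0

/-- Slope stability for a single bundle. -/
def BStable (rank : C → ℕ) (deg : C → ℤ) (B : C) : Prop :=
  ∀ X : Subobject B, X ≠ ⊥ → X ≠ ⊤ →
    bslope (deg (X : C)) (rank (X : C)) < bslope (deg B) (rank B)

/-- Slope semistability for a single bundle. -/
def BSemistable (rank : C → ℕ) (deg : C → ℤ) (B : C) : Prop :=
  ∀ X : Subobject B, X ≠ ⊥ →
    bslope (deg (X : C)) (rank (X : C)) ≤ bslope (deg B) (rank B)

/-- degree of the bottom subobject is zero -/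
lemma deg_bot_aux (deg : C → ℤ)
    (hdeg_add : ∀ (B : C) (X : Subobject B), deg B = deg (X : C) + deg (cokernel X.arrow))
    (hdiso : ∀ A B : C, Nonempty (A ≅ B) → deg A = deg B)
    (B : C) : deg (((⊥ : Subobject B)) : C) = 0 := by
  have h := hdeg_add B ⊥
  have hiso : Nonempty (cokernel (⊥ : Subobject B).arrow ≅ B) :=
    ⟨(cokernelIsoOfEq (Subobject.bot_arrow)) ≪≫ cokernelZeroIsoTarget⟩
  have := hdiso _ _ hiso
  omega

/-- slope bounds for subobjects of a stable bundle -/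
lemma sub_bound (rank : C → ℕ) (deg : C → ℤ) (B : C) (r : ℕ) (d : ℤ)
    (hrank_bot : ∀ (X : Subobject B), X = ⊥ ↔ rank (X : C) = 0)
    (hrank_top : rank ((⊤ : Subobject B) : C) = rank B)
    (hdeg_top : deg ((⊤ : Subobject B) : C) = deg B)
    (hdeg_bot : deg (((⊥ : Subobject B)) : C) = 0)
    (hr : 0 < r) (hrB : rank B = r) (hdB : deg B = d)
    (hs : BStable rank deg B) (X : Subobject B) :
    ((deg (X : C) : ℝ) * r ≤ (d : ℝ) * rank (X : C)) ∧
      (X ≠ ⊥ → X ≠ ⊤ → (deg (X : C) : ℝ) * r < (d : ℝ) * rank (X : C)) := by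
  by_cases hb : X = ⊥
  · subst hb
    rw [hdeg_bot, (hrank_bot ⊥).mp rfl]
    simp
  by_cases ht : X = ⊤
  · subst ht
    rw [hdeg_top, hrank_top, hrB, hdB]
    exact ⟨le_of_eq (by ring), fun _ h => absurd rfl h⟩
  · have h := hs X hb ht
    rw [hrB, hdB] at h
    unfold bslope at h
    have hx : 0 < rank (X : C) := by
      rcases Nat.eq_zero_or_pos (rank (X : C)) with h0 | h0
      · exact absurd ((hrank_bot X).mpr h0) hb
      · exact h0
    have hxr : (0:ℝ) < rank (X : C) := by exact_mod_cast hx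
    have hrr : (0:ℝ) < r := by exact_mod_cast hr
    have := (div_lt_div_iff₀ hxr hrr).mp h
    exact ⟨le_of_lt this, fun _ _ => this⟩

lemma arith_core (r a b : ℕ) (d d1 d2 : ℤ) (τ : ℝ)
    (hr : 0 < (r:ℝ)) (hab : 0 < (a:ℝ) + (b:ℝ)) (hba : (b:ℝ) ≤ (a:ℝ))
    (hτ : (d:ℝ)/r < τ)
    (h1 : (d1:ℝ) * r ≤ (d:ℝ) * a) (h2 : (d2:ℝ) * r ≤ (d:ℝ) * b)
    (hstrict : (a:ℝ) = b → (d1:ℝ) * r + (d2:ℝ) * r < (d:ℝ) * a + (d:ℝ) * b) :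
    (((d1:ℝ) + d2) / ((a:ℝ) + b) - τ) -
      ((b:ℝ)/(r:ℝ)) * (((r:ℝ)+(r:ℝ))/((a:ℝ)+(b:ℝ))) * ((((d:ℝ)+(d:ℝ))/((r:ℝ)+(r:ℝ))) - τ) < 0 := by
  have hrne : (r:ℝ) ≠ 0 := ne_of_gt hr
  have habne : (a:ℝ) + b ≠ 0 := ne_of_gt hab
  have key : (((d1:ℝ) + d2) / ((a:ℝ) + b) - τ) -
      ((b:ℝ)/(r:ℝ)) * (((r:ℝ)+(r:ℝ))/((a:ℝ)+(b:ℝ))) * ((((d:ℝ)+(d:ℝ))/((r:ℝ)+(r:ℝ))) - τ)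
      = (((d1:ℝ)+d2)*r - 2*b*d - τ*((a:ℝ)-b)*r) / (((a:ℝ)+b)*r) := by
    field_simp
    ring
  rw [key]
  apply div_neg_of_neg_of_pos _ (by positivity)
  rcases eq_or_lt_of_le hba with heq | hlt
  · have h5 := hstrict heq.symm
    have hz : τ*((a:ℝ)-b)*r = 0 := by rw [heq]; ring
    have hda : (d:ℝ)*a = (d:ℝ)*b := by rw [heq]
    linarith
  · have h3 : (d:ℝ)/r * ((a:ℝ)-b) < τ * ((a:ℝ)-b) := by
      apply mul_lt_mul_of_pos_right hτ (by linarith)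
    have h4 : (d:ℝ)/r * ((a:ℝ)-b) * r = (d:ℝ)*a - (d:ℝ)*b := by
      field_simp
    nlinarith

/-- Φ is mono -/
lemma phi_mono (rank : C → ℕ) (deg : C → ℤ) (E1 E2 : C) (Φ : E2 ⟶ E1) (r : ℕ) (d : ℤ)
    (hrank_bot : ∀ (B : C) (X : Subobject B), X = ⊥ ↔ rank (X : C) = 0)
    (hrank_top : ∀ B : C, rank ((⊤ : Subobject B) : C) = rank B)
    (hdeg_top : ∀ B : C, deg ((⊤ : Subobject B) : C) = deg B)
    (hrank_add : ∀ (B : C) (X : Subobject B), rank B = rank (X : C) + rank (cokernel X.arrow))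
    (hdeg_add : ∀ (B : C) (X : Subobject B), deg B = deg (X : C) + deg (cokernel X.arrow))
    (hiso : ∀ A B : C, Nonempty (A ≅ B) → rank A = rank B ∧ deg A = deg B)
    (hr : 0 < r)
    (hr1 : rank E1 = r) (hr2 : rank E2 = r) (hd1 : deg E1 = d) (hd2 : deg E2 = d)
    (hs1 : BStable rank deg E1) (hs2 : BStable rank deg E2) (hΦ : Φ ≠ 0) :
    Mono Φ := by
  by_cases hK : kernelSubobject Φ = ⊥
  · have h0 : kernel.ι Φ = 0 := Subobject.mk_eq_bot_iff_zero.mp hK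
    exact Preadditive.mono_of_kernel_zero h0
  · exfalso
    set K : Subobject E2 := kernelSubobject Φ with hKdef
    -- cokernel of K.arrow is isomorphic to image Φ
    have hcoker_iso : Nonempty (cokernel K.arrow ≅ image Φ) := by
      refine ⟨?_ ≪≫ Abelian.coimageIsoImage' Φ⟩
      exact (cokernelEpiComp (kernelSubobjectIso Φ).inv K.arrow).symm ≪≫
        cokernelIsoOfEq (kernelSubobject_arrow' Φ)
    -- the image subobject
    set I : Subobject E1 := imageSubobject Φ with hIdef
    have hI_iso : Nonempty ((I : C) ≅ image Φ) := ⟨imageSubobjectIso Φ⟩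
    have hI_ne_bot : I ≠ ⊥ := by
      intro h
      have : image.ι Φ = 0 := Subobject.mk_eq_bot_iff_zero.mp h
      apply hΦ
      rw [← image.fac Φ, this, comp_zero]
    -- rank/deg of I equals rank/deg of cokernel K.arrow
    have hIQ := hiso _ _ ⟨(hI_iso.some) ≪≫ hcoker_iso.some.symm⟩
    have hradd := hrank_add E2 K
    have hdadd := hdeg_add E2 K
    rw [hr2] at hradd
    rw [hd2] at hdadd
    -- K ≠ ⊤
    have hK_ne_top : K ≠ ⊤ := by
      intro h
      have hrK : rank (K : C) = r := by rw [h, hrank_top, hr2]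
      have : rank (cokernel K.arrow) = 0 := by omega
      have : rank (I : C) = 0 := by rw [hIQ.1, this]
      exact hI_ne_bot ((hrank_bot E1 I).mpr this)
    -- strict slope bound for K
    have hdeg_botE2 : deg (((⊥ : Subobject E2)) : C) = 0 :=
      deg_bot_aux deg hdeg_add (fun A B h => (hiso A B h).2) E2
    have hbK := (sub_bound rank deg E2 r d (hrank_bot E2) (hrank_top E2) (hdeg_top E2)
      hdeg_botE2 hr hr2 hd2 hs2 K).2 hK hK_ne_top
    -- weak slope bound for I
    have hdeg_botE1 : deg (((⊥ : Subobject E1)) : C) = 0 :=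
      deg_bot_aux deg hdeg_add (fun A B h => (hiso A B h).2) E1
    have hbI := (sub_bound rank deg E1 r d (hrank_bot E1) (hrank_top E1) (hdeg_top E1)
      hdeg_botE1 hr hr1 hd1 hs1 I).1
    -- contradiction
    have h1 : (rank (I : C) : ℝ) = rank (cokernel K.arrow) := by exact_mod_cast hIQ.1
    have h2 : (deg (I : C) : ℝ) = deg (cokernel K.arrow) := by exact_mod_cast hIQ.2
    have h3 : (r : ℝ) = (rank (K : C) : ℝ) + rank (cokernel K.arrow) := by exact_mod_cast hradd
    have h4 : (d : ℝ) = (deg (K : C) : ℝ) + deg (cokernel K.arrow) := by exact_mod_cast hdadd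
    have e1 : (d:ℝ) * r = (d:ℝ) * rank (K : C) + (d:ℝ) * rank (cokernel K.arrow) := by
      rw [h3]; ring
    have e2 : (d:ℝ) * r = (deg (K : C) : ℝ) * r + (deg (cokernel K.arrow) : ℝ) * r := by
      rw [h4]; ring
    have e3 : (deg (I : C) : ℝ) * r = (deg (cokernel K.arrow) : ℝ) * r := by rw [h2]
    have e4 : (d:ℝ) * rank (I : C) = (d:ℝ) * rank (cokernel K.arrow) := by rw [h1]
    have e3 : (deg (I : C) : ℝ) * r = (deg (cokernel K.arrow) : ℝ) * r := by rw [h2]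
    have e4 : (d:ℝ) * rank (I : C) = (d:ℝ) * rank (cokernel K.arrow) := by rw [h1]
    linarith

/-- if `E₁` and `E₂` are stable bundles of the same rank and degree and
`Φ ≠ 0`, then the triple is `τ`-stable for every `τ > μ(E₁)`. -/
theorem tStable_of_stable_same_rank_deg
    (rank : C → ℕ) (deg : C → ℤ) (E1 E2 : C) (Φ : E2 ⟶ E1) (r : ℕ) (d : ℤ)
    (hrank_bot : ∀ (B : C) (X : Subobject B), X = ⊥ ↔ rank (X : C) = 0)
    (hrank_top : ∀ B : C, rank ((⊤ : Subobject B) : C) = rank B)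
    (hdeg_top : ∀ B : C, deg ((⊤ : Subobject B) : C) = deg B)
    (hrank_add : ∀ (B : C) (X : Subobject B), rank B = rank (X : C) + rank (cokernel X.arrow))
    (hdeg_add : ∀ (B : C) (X : Subobject B), deg B = deg (X : C) + deg (cokernel X.arrow))
    (hiso : ∀ A B : C, Nonempty (A ≅ B) → rank A = rank B ∧ deg A = deg B)
    (hr : 0 < r)
    (hr1 : rank E1 = r) (hr2 : rank E2 = r) (hd1 : deg E1 = d) (hd2 : deg E2 = d)
    (hs1 : BStable rank deg E1) (hs2 : BStable rank deg E2) (hΦ : Φ ≠ 0) :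
    ∀ τ : ℝ, bslope d r < τ → TStable rank deg E1 E2 Φ τ := by
  intro τ hτ E1' E2' hsub hnbot hntop
  haveI hΦmono : Mono Φ := phi_mono rank deg E1 E2 Φ r d hrank_bot hrank_top hdeg_top
    hrank_add hdeg_add hiso hr hr1 hr2 hd1 hd2 hs1 hs2 hΦ
  -- notation
  set a := rank ((E1' : C)) with hadef
  set b := rank ((E2' : C)) with hbdef
  -- step B : b ≤ a
  have hfac : (E1'.factorThru (E2'.arrow ≫ Φ) hsub) ≫ E1'.arrow = E2'.arrow ≫ Φ :=
    Subobject.factorThru_arrow _ _ _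
  set f := E1'.factorThru (E2'.arrow ≫ Φ) hsub with hfdef
  haveI hmono_comp : Mono (f ≫ E1'.arrow) := by rw [hfac]; exact mono_comp _ _
  haveI hmono_f : Mono f := mono_of_mono f E1'.arrow
  have hXiso := hiso _ _ ⟨Subobject.underlyingIso f⟩
  have hradd' := hrank_add ((E1' : C)) (Subobject.mk f)
  have hba : b ≤ a := by
    have h1 := hXiso.1
    omega
  -- a + b > 0
  have hapos : 0 < a := by
    rcases Nat.eq_zero_or_pos a with h0 | h0
    · exfalso
      have hb0 : b = 0 := by omega
      exact hnbot ⟨(hrank_bot E1 E1').mpr h0, (hrank_bot E2 E2').mpr hb0⟩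
    · exact h0
  -- slope bounds
  have hdeg_botE1 : deg (((⊥ : Subobject E1)) : C) = 0 :=
    deg_bot_aux deg hdeg_add (fun A B h => (hiso A B h).2) E1
  have hdeg_botE2 : deg (((⊥ : Subobject E2)) : C) = 0 :=
    deg_bot_aux deg hdeg_add (fun A B h => (hiso A B h).2) E2
  have hb1 := sub_bound rank deg E1 r d (hrank_bot E1) (hrank_top E1) (hdeg_top E1)
    hdeg_botE1 hr hr1 hd1 hs1 E1'
  have hb2 := sub_bound rank deg E2 r d (hrank_bot E2) (hrank_top E2) (hdeg_top E2)
    hdeg_botE2 hr hr2 hd2 hs2 E2'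
  -- strictness in the equal-rank case
  have hstrict : (a:ℝ) = (b:ℝ) →
      (deg ((E1' : C)) : ℝ) * r + (deg ((E2' : C)) : ℝ) * r < (d:ℝ) * a + (d:ℝ) * b := by
    intro hab
    have hab' : a = b := by exact_mod_cast hab
    have hane : E1' ≠ ⊥ := by
      intro h
      exact hapos.ne' (((hrank_bot E1 E1').mp h))
    have hbne : E2' ≠ ⊥ := by
      intro h
      have := (hrank_bot E2 E2').mp h
      omega
    by_cases ht1 : E1' = ⊤
    · have ht2 : E2' ≠ ⊤ := fun h => hntop ⟨ht1, h⟩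
      have := hb2.2 hbne ht2
      have := hb1.1
      linarith
    · have := hb1.2 hane ht1
      have := hb2.1
      linarith
  -- conclude by arithmetic
  have harith := arith_core r a b d (deg ((E1' : C))) (deg ((E2' : C))) τ
    (by exact_mod_cast hr) (by push_cast; positivity)
    (by exact_mod_cast hba) (by unfold bslope at hτ; exact hτ)
    hb1.1 hb2.1 hstrict
  unfold theta thetaTau bslope
  rw [hr1, hr2, hd1, hd2]
  push_cast
  linarith [harith]
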